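/- Let X be a real normed space, 𝒰 ⊆ X a nonempty set, and J : X → ℝ be Fréchet differentiable at a point ū ∈ 𝒰. Suppose ū is a local minimizer of J over 𝒰, i.e., there exists δ > 0 such that J(ū) ≤ J(u) for every u ∈ 𝒰 with ‖u − ū‖ < δ. Then DJ(ū)(v) ≥ 0 for every v ∈ T_𝒰(ū), where DJ(ū) denotes the Fréchet derivative of J at ū. -/

import Mathlib

open Filter Topology Metric

/-- The adjacent (intermediate) tangent cone to `K` at `x`. -/
def adjacentCone {X : Type*} [NormedAddCommGroup X] [NormedSpace ℝ X]
    (K : Set X) (x : X) : Set X :=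
  {v | Tendsto (fun ε : ℝ => infDist (x + ε • v) K / ε) (𝓝[>] (0 : ℝ)) (𝓝 0)}

theorem first_order_necessary_condition
    {X : Type*} [NormedAddCommGroup X] [NormedSpace ℝ X]
    (𝒰 : Set X) (h𝒰 : 𝒰.Nonempty) (ubar : X) (hubar : ubar ∈ 𝒰)
    (J : X → ℝ) (L : X →L[ℝ] ℝ) (hJ : HasFDerivAt J L ubar)
    (hmin : ∃ δ : ℝ, 0 < δ ∧ ∀ u ∈ 𝒰, ‖u - ubar‖ < δ → J ubar ≤ J u) :
    ∀ v ∈ adjacentCone 𝒰 ubar, 0 ≤ L v := by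
  intro v hv
  obtain ⟨δ, hδ, hmin⟩ := hmin
  set l := 𝓝[>] (0 : ℝ) with hl
  -- choose near-minimizers of the distance
  have key : ∀ ε : ℝ, 0 < ε →
      ∃ z ∈ 𝒰, dist (ubar + ε • v) z < infDist (ubar + ε • v) 𝒰 + ε ^ 2 := by
    intro ε hε
    refine (Metric.infDist_lt_iff h𝒰).1 ?_
    nlinarith [Metric.infDist_nonneg (x := ubar + ε • v) (s := 𝒰)]
  choose! u hu hud using key
  have hεpos : ∀ᶠ ε in l, (0 : ℝ) < ε := eventually_mem_nhdsWithin
  -- the normalized distance error tends to 0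
  have he0 : Tendsto (fun ε : ℝ => ‖u ε - ubar - ε • v‖ / ε) l (𝓝 0) := by
    have hg : Tendsto (fun ε : ℝ => infDist (ubar + ε • v) 𝒰 / ε + ε) l (𝓝 0) := by
      have := hv.add (tendsto_id.mono_left nhdsWithin_le_nhds)
      simpa using this
    refine squeeze_zero' ?_ ?_ hg
    · filter_upwards [hεpos] with ε hε
      positivity
    · filter_upwards [hεpos] with ε hε
      have h1 : ‖u ε - ubar - ε • v‖ = dist (ubar + ε • v) (u ε) := by
        rw [dist_eq_norm, ← norm_neg]
        congr 1
        abel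
      rw [h1]
      have h2 := (hud ε hε).le
      have h3 : (infDist (ubar + ε • v) 𝒰 + ε ^ 2) / ε
          = infDist (ubar + ε • v) 𝒰 / ε + ε := by
        field_simp
      rw [← h3]
      gcongr
  -- the normalized increments tend to v
  set w : ℝ → X := fun ε => ε⁻¹ • (u ε - ubar) with hwdef
  have hw : Tendsto w l (𝓝 v) := by
    rw [tendsto_iff_norm_sub_tendsto_zero]
    refine he0.congr' ?_
    filter_upwards [hεpos] with ε hε
    have : w ε - v = ε⁻¹ • (u ε - ubar - ε • v) := by
      simp only [hwdef]
      rw [smul_sub ε⁻¹ (u ε - ubar) (ε • v), smul_smul, inv_mul_cancel₀ hε.ne', one_smul]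
    rw [this, norm_smul, norm_inv, Real.norm_of_nonneg hε.le, inv_mul_eq_div]
  have huw : ∀ᶠ ε in l, u ε - ubar = ε • w ε := by
    filter_upwards [hεpos] with ε hε
    rw [hwdef, smul_smul, mul_inv_cancel₀ hε.ne', one_smul]
  -- u ε → ubar
  have hutend : Tendsto u l (𝓝 ubar) := by
    have h1 : Tendsto (fun ε : ℝ => ε • w ε) l (𝓝 ((0 : ℝ) • v)) :=
      (tendsto_id.mono_left nhdsWithin_le_nhds).smul hw
    rw [zero_smul] at h1
    have h2 : Tendsto (fun ε => (u ε - ubar) + ubar) l (𝓝 (0 + ubar)) := by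
      refine Tendsto.add (h1.congr' ?_) tendsto_const_nhds
      filter_upwards [huw] with ε h using h.symm
    simpa using h2
  -- u ε - ubar = O(ε)
  have hO : (fun ε => u ε - ubar) =O[l] fun ε : ℝ => ε := by
    rw [Asymptotics.isBigO_iff]
    refine ⟨‖v‖ + 1, ?_⟩
    have hb : ∀ᶠ ε in l, ‖w ε‖ < ‖v‖ + 1 :=
      (hw.norm.eventually_lt_const (by linarith))
    filter_upwards [huw, hb, hεpos] with ε h1 h2 hε
    rw [h1, norm_smul]
    have : ‖ε‖ * ‖w ε‖ ≤ ‖ε‖ * (‖v‖ + 1) :=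
      mul_le_mul_of_nonneg_left h2.le (norm_nonneg _)
    calc ‖ε‖ * ‖w ε‖ ≤ ‖ε‖ * (‖v‖ + 1) := this
      _ = (‖v‖ + 1) * ‖ε‖ := by ring
  -- remainder term is o(ε)
  have hrem : Tendsto (fun ε => (J (u ε) - J ubar - L (u ε - ubar)) / ε) l (𝓝 0) := by
    have hlo : (fun ε => J (u ε) - J ubar - L (u ε - ubar)) =o[l] fun ε : ℝ => ε :=
      (hJ.isLittleO.comp_tendsto hutend).trans_isBigO hO
    exact hlo.tendsto_div_nhds_zero
  -- linear term
  have hlin : Tendsto (fun ε => L (u ε - ubar) / ε) l (𝓝 (L v)) := by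
    have h1 : Tendsto (fun ε => L (w ε)) l (𝓝 (L v)) :=
      (L.continuous.tendsto v).comp hw
    refine h1.congr' ?_
    filter_upwards [huw, hεpos] with ε h hε
    have h2 : L (u ε - ubar) = ε * L (w ε) := by rw [h, map_smul, smul_eq_mul]
    show L (w ε) = L (u ε - ubar) / ε
    rw [h2, mul_div_cancel_left₀ _ hε.ne']
  -- difference quotient tends to L v
  have hquot : Tendsto (fun ε => (J (u ε) - J ubar) / ε) l (𝓝 (L v)) := by
    have := hrem.add hlin
    rw [zero_add] at this
    refine this.congr' ?_
    filter_upwards [hεpos] with ε hε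
    rw [← add_div]
    ring_nf
  -- eventual nonnegativity
  have hnn : ∀ᶠ ε in l, 0 ≤ (J (u ε) - J ubar) / ε := by
    have hclose : ∀ᶠ ε in l, ‖u ε - ubar‖ < δ := by
      have h0 : Tendsto (fun ε => ‖u ε - ubar‖) l (𝓝 0) := by
        have := (hutend.sub (tendsto_const_nhds (x := ubar))).norm
        simpa using this
      exact h0.eventually_lt_const hδ
    filter_upwards [hεpos, hclose] with ε hε h2
    have := hmin (u ε) (hu ε hε) h2
    exact div_nonneg (by linarith) hε.le
  exact ge_of_tendsto hquot hnn
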